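/- Let G be a finite simple graph of order n ≥ 3 such that min{δ(G), δ(Ḡ)} = 0, where Ḡ is the complement of G. Then γ_cer(G) + γ_cer(Ḡ) ≤ n + 1 and γ_cer(G) · γ_cer(Ḡ) ≤ n. Moreover, the following are equivalent: (a) γ_cer(G) + γ_cer(Ḡ) = n + 1; (b) γ_cer(G) · γ_cer(Ḡ) = n; (c) G or Ḡ has an isolated vertex and every vertex of it is isolated, a leaf, or adjacent to exactly one leaf (i.e., G or Ḡ is the complement of a complete graph, or the union of the corona of some graph and a positive number of isolated vertices). -/

import Mathlib

open Finset

variable {V : Type*} [Fintype V] [DecidableEq V]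

/-- `D` is a dominating set of `G`: every vertex outside `D` has a neighbour in `D`. -/
def IsDomSet (G : SimpleGraph V) (D : Finset V) : Prop :=
  ∀ v ∉ D, ∃ u ∈ D, G.Adj u v

/-- `D` is a certified dominating set of `G`: it is dominating and every vertex of `D`
has either zero or at least two neighbours outside `D`. -/
def IsCertDomSet (G : SimpleGraph V) [DecidableRel G.Adj] (D : Finset V) : Prop :=
  IsDomSet G D ∧ ∀ v ∈ D, (G.neighborFinset v \ D).card = 0 ∨ 2 ≤ (G.neighborFinset v \ D).card

/-- The domination number: minimum cardinality of a dominating set. -/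
noncomputable def gamma (G : SimpleGraph V) : ℕ :=
  sInf {n | ∃ D : Finset V, IsDomSet G D ∧ D.card = n}

/-- The certified domination number: minimum cardinality of a certified dominating set. -/
noncomputable def gammaCer (G : SimpleGraph V) [DecidableRel G.Adj] : ℕ :=
  sInf {n | ∃ D : Finset V, IsCertDomSet G D ∧ D.card = n}

/-- A leaf is a vertex of degree one. -/
abbrev IsLeaf (G : SimpleGraph V) [DecidableRel G.Adj] (v : V) : Prop := G.degree v = 1

/-- The set of leaf-neighbours of a vertex. -/
abbrev leafNbrs (G : SimpleGraph V) [DecidableRel G.Adj] (v : V) : Finset V :=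
  (G.neighborFinset v).filter (fun l => G.degree l = 1)

/-- A weak support is a vertex adjacent to exactly one leaf. -/
abbrev IsWeakSupport (G : SimpleGraph V) [DecidableRel G.Adj] (v : V) : Prop :=
  (leafNbrs G v).card = 1

/-- A strong support is a vertex adjacent to at least two leaves. -/
abbrev IsStrongSupport (G : SimpleGraph V) [DecidableRel G.Adj] (v : V) : Prop :=
  2 ≤ (leafNbrs G v).card

set_option linter.unusedSectionVars false

section NordhausGaddumAux

variable {V : Type*} [Fintype V] [DecidableEq V]

lemma univ_cds (G : SimpleGraph V) [DecidableRel G.Adj] : IsCertDomSet G (univ : Finset V) :=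
  ⟨fun v hv => absurd (mem_univ v) hv, fun v _ => Or.inl (by simp)⟩

lemma cdsSet_nonempty (G : SimpleGraph V) [DecidableRel G.Adj] :
    {n | ∃ D : Finset V, IsCertDomSet G D ∧ D.card = n}.Nonempty :=
  ⟨_, univ, univ_cds G, rfl⟩

lemma gammaCer_le_card (G : SimpleGraph V) [DecidableRel G.Adj] :
    gammaCer G ≤ Fintype.card V :=
  Nat.sInf_le ⟨univ, univ_cds G, card_univ⟩

lemma gammaCer_eq_one (G : SimpleGraph V) [DecidableRel G.Adj] (v : V)
    (hcard : 3 ≤ Fintype.card V) (huniv : ∀ u, u ≠ v → G.Adj v u) : gammaCer G = 1 := by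
  have h1 : IsCertDomSet G {v} := by
    constructor
    · intro u hu
      exact ⟨v, mem_singleton_self v, huniv u (by simpa using hu)⟩
    · intro x hx
      rw [mem_singleton] at hx
      subst hx
      right
      have hsub : univ.erase x ⊆ G.neighborFinset x \ {x} := by
        intro u hu
        rw [mem_erase] at hu
        rw [mem_sdiff, SimpleGraph.mem_neighborFinset, mem_singleton]
        exact ⟨huniv u hu.1, hu.1⟩
      calc 2 ≤ (univ.erase x).card := by
              rw [card_erase_of_mem (mem_univ x), card_univ]; omega
        _ ≤ _ := card_le_card hsub
  have hmem : 1 ∈ {n | ∃ D : Finset V, IsCertDomSet G D ∧ D.card = n} :=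
    ⟨{v}, h1, card_singleton v⟩
  have hle : gammaCer G ≤ 1 := Nat.sInf_le hmem
  have hne : gammaCer G ≠ 0 := by
    intro h0
    rcases (Nat.sInf_eq_zero.mp h0) with h0' | h0'
    · obtain ⟨D, hD, hcard0⟩ := h0'
      have hDempty : D = ∅ := card_eq_zero.mp hcard0
      subst hDempty
      obtain ⟨u, hu, -⟩ := hD.1 v (notMem_empty v)
      exact notMem_empty u hu
    · exact absurd h0' (Set.nonempty_iff_ne_empty.mp (cdsSet_nonempty G))
  omega

lemma mem_leafNbrs {G : SimpleGraph V} [DecidableRel G.Adj] {v x : V} :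
    x ∈ leafNbrs G v ↔ G.Adj v x ∧ G.degree x = 1 := by
  simp [leafNbrs, SimpleGraph.mem_neighborFinset]

lemma leaf_nbr_finset {G : SimpleGraph V} [DecidableRel G.Adj] {l u : V}
    (hl : G.degree l = 1) (hadj : G.Adj l u) : G.neighborFinset l = {u} := by
  have hu : u ∈ G.neighborFinset l := (SimpleGraph.mem_neighborFinset G l u).mpr hadj
  obtain ⟨a, ha⟩ := card_eq_one.mp hl
  rw [ha] at hu ⊢
  rw [mem_singleton] at hu
  rw [hu]

lemma adj_degree_pos {G : SimpleGraph V} [DecidableRel G.Adj] {a b : V}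
    (hab : G.Adj a b) : 1 ≤ G.degree a :=
  card_pos.mpr ⟨b, (SimpleGraph.mem_neighborFinset G a b).mpr hab⟩

lemma weakSupport_mem {G : SimpleGraph V} [DecidableRel G.Adj] {D : Finset V}
    (hD : IsCertDomSet G D) {x : V} (hx : IsWeakSupport G x) : x ∈ D := by
  by_contra hxD
  obtain ⟨l, hleq⟩ := card_eq_one.mp hx
  have hlmem : l ∈ leafNbrs G x := by rw [hleq]; exact mem_singleton_self l
  rw [mem_leafNbrs] at hlmem
  obtain ⟨hadj, hldeg⟩ := hlmem
  have hNl : G.neighborFinset l = {x} := leaf_nbr_finset hldeg hadj.symm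
  have hlD : l ∈ D := by
    by_contra hlD
    obtain ⟨d, hdD, hdl⟩ := hD.1 l hlD
    have : d ∈ G.neighborFinset l := (SimpleGraph.mem_neighborFinset G l d).mpr hdl.symm
    rw [hNl, mem_singleton] at this
    exact hxD (this ▸ hdD)
  have := hD.2 l hlD
  rw [hNl] at this
  have hsd : ({x} : Finset V) \ D = {x} := by
    rw [Finset.sdiff_eq_self_iff_disjoint, disjoint_singleton_left]
    exact hxD
  rw [hsd, card_singleton] at this
  omega

lemma cds_eq_univ {G : SimpleGraph V} [DecidableRel G.Adj]
    (hall : ∀ v, G.degree v = 0 ∨ IsLeaf G v ∨ IsWeakSupport G v)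
    {D : Finset V} (hD : IsCertDomSet G D) : D = univ := by
  rw [eq_univ_iff_forall]
  intro u
  by_contra hu
  obtain ⟨s, hsD, hsu⟩ := hD.1 u hu
  have hdeg_pos : ∀ {a b : V}, G.Adj a b → G.degree b ≠ 0 := by
    intro a b hab h0
    have : a ∈ G.neighborFinset b := (SimpleGraph.mem_neighborFinset G b a).mpr hab.symm
    rw [card_eq_zero.mp (h0)] at this
    exact notMem_empty a this
  rcases hall u with h0 | hleaf | hweak
  · exact hdeg_pos hsu h0
  · have hNu : G.neighborFinset u = {s} := leaf_nbr_finset hleaf hsu.symm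
    have hcert := hD.2 s hsD
    have humem : u ∈ G.neighborFinset s \ D := by
      rw [mem_sdiff, SimpleGraph.mem_neighborFinset]
      exact ⟨hsu, hu⟩
    have hpos : (G.neighborFinset s \ D).card ≠ 0 := by
      intro hc; rw [card_eq_zero.mp hc] at humem; exact notMem_empty u humem
    have h2 : 2 ≤ (G.neighborFinset s \ D).card := by
      rcases hcert with h | h
      · omega
      · exact h
    obtain ⟨a, ha, b, hb, hab⟩ := one_lt_card.mp (by omega : 1 < (G.neighborFinset s \ D).card)
    have hkey : ∀ u', u' ∈ G.neighborFinset s \ D → u' ≠ u → False := by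
      intro u' hu' hne
      rw [mem_sdiff, SimpleGraph.mem_neighborFinset] at hu'
      obtain ⟨hadj', hu'D⟩ := hu'
      rcases hall u' with h0' | hleaf' | hweak'
      · exact hdeg_pos hadj' h0'
      · have h1 : u ∈ leafNbrs G s := mem_leafNbrs.mpr ⟨hsu, hleaf⟩
        have h2' : u' ∈ leafNbrs G s := mem_leafNbrs.mpr ⟨hadj', hleaf'⟩
        have hlt : 1 < (leafNbrs G s).card :=
          one_lt_card.mpr ⟨u, h1, u', h2', fun hh => hne hh.symm⟩
        rcases hall s with h0s | hleafs | hweaks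
        · exact hdeg_pos hsu.symm h0s
        · have : (leafNbrs G s).card ≤ G.degree s := card_filter_le _ _
          rw [hleafs] at this; omega
        · unfold IsWeakSupport at hweaks; omega
      · exact hu'D (weakSupport_mem hD hweak')
    rcases eq_or_ne a u with rfl | hne
    · exact hkey b hb (fun h => hab (h.symm ▸ rfl))
    · exact hkey a ha hne
  · exact hu (weakSupport_mem hD hweak)

/-- B-vertices: degree at least two and no leaf neighbour. -/
abbrev BP (G : SimpleGraph V) [DecidableRel G.Adj] (v : V) : Prop :=
  2 ≤ G.degree v ∧ leafNbrs G v = ∅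

/-- Supports: not a leaf, with a leaf neighbour. -/
abbrev SP (G : SimpleGraph V) [DecidableRel G.Adj] (v : V) : Prop :=
  G.degree v ≠ 1 ∧ leafNbrs G v ≠ ∅

/-- No B-neighbours. -/
abbrev NoB (G : SimpleGraph V) [DecidableRel G.Adj] (x : V) : Prop :=
  ∀ b, BP G b → ¬ G.Adj x b

lemma SP_degree {G : SimpleGraph V} [DecidableRel G.Adj] {v : V} (h : SP G v) :
    2 ≤ G.degree v := by
  obtain ⟨l, hl⟩ := nonempty_iff_ne_empty.mpr h.2
  rw [mem_leafNbrs] at hl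
  have := adj_degree_pos hl.1
  have := h.1
  omega

lemma exists_small_cds (G : SimpleGraph V) [DecidableRel G.Adj]
    (hbad : ¬ ∀ v, G.degree v = 0 ∨ IsLeaf G v ∨ IsWeakSupport G v) :
    ∃ D : Finset V, IsCertDomSet G D ∧ D.card < Fintype.card V := by
  push_neg at hbad
  obtain ⟨w, hw⟩ := hbad
  obtain ⟨hw0, hw1, hwW⟩ := hw
  have hcardpos : 0 < Fintype.card V := Fintype.card_pos_iff.mpr ⟨w⟩
  by_cases hstrong : ∃ s : V, 2 ≤ (leafNbrs G s).card
  · -- Case I: a vertex with two leaf neighbours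
    obtain ⟨s, hs⟩ := hstrong
    obtain ⟨l1, hl1, l2, hl2, hne⟩ := one_lt_card.mp (by omega : 1 < (leafNbrs G s).card)
    rw [mem_leafNbrs] at hl1 hl2
    have hN1 : G.neighborFinset l1 = {s} := leaf_nbr_finset hl1.2 hl1.1.symm
    have hN2 : G.neighborFinset l2 = {s} := leaf_nbr_finset hl2.2 hl2.1.symm
    refine ⟨univ \ {l1, l2}, ⟨?_, ?_⟩, ?_⟩
    · intro v hv
      have hvmem : v ∈ ({l1, l2} : Finset V) := by
        by_contra hcon; exact hv (mem_sdiff.mpr ⟨mem_univ v, hcon⟩)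
      have hsD : s ∈ univ \ {l1, l2} := by
        rw [mem_sdiff, mem_insert, mem_singleton]
        refine ⟨mem_univ s, ?_⟩
        push_neg
        exact ⟨fun hh => G.irrefl (hh ▸ hl1.1), fun hh => G.irrefl (hh ▸ hl2.1)⟩
      refine ⟨s, hsD, ?_⟩
      rw [mem_insert, mem_singleton] at hvmem
      rcases hvmem with rfl | rfl
      exacts [hl1.1, hl2.1]
    · intro v hv
      rcases eq_or_ne v s with rfl | hvs
      · right
        have hEq : G.neighborFinset v \ (univ \ {l1, l2}) = {l1, l2} := by
          ext x
          simp only [mem_sdiff, mem_univ, true_and, not_not, mem_insert, mem_singleton,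
            SimpleGraph.mem_neighborFinset]
          constructor
          · rintro ⟨-, hh⟩; exact hh
          · rintro (rfl | rfl)
            exacts [⟨hl1.1, Or.inl rfl⟩, ⟨hl2.1, Or.inr rfl⟩]
        rw [hEq, card_insert_of_notMem (by simpa using hne), card_singleton]
      · left
        rw [card_eq_zero, eq_empty_iff_forall_notMem]
        intro x hx
        rw [mem_sdiff, mem_sdiff, SimpleGraph.mem_neighborFinset] at hx
        obtain ⟨hadj, hxn⟩ := hx
        have hxmem : x ∈ ({l1, l2} : Finset V) := by
          by_contra hcon; exact hxn ⟨mem_univ x, hcon⟩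
        have hvN : v ∈ G.neighborFinset x := (SimpleGraph.mem_neighborFinset G x v).mpr hadj.symm
        rw [mem_insert, mem_singleton] at hxmem
        rcases hxmem with rfl | rfl
        · rw [hN1, mem_singleton] at hvN; exact hvs hvN
        · rw [hN2, mem_singleton] at hvN; exact hvs hvN
    · have hsub : ({l1, l2} : Finset V) ⊆ univ := subset_univ _
      rw [card_sdiff_of_subset hsub, card_univ, card_insert_of_notMem (by simpa using hne), card_singleton]
      omega
  · -- Case II
    push_neg at hstrong
    have hle1 : ∀ s : V, (leafNbrs G s).card ≤ 1 := fun s => by have := hstrong s; omega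
    have hwB : leafNbrs G w = ∅ := by
      have := hle1 w
      exact card_eq_zero.mp (by omega)
    have hdegw : 2 ≤ G.degree w := by
      have h0 : G.degree w ≠ 0 := hw0
      have h1 : G.degree w ≠ 1 := hw1
      omega
    -- the set C of B-vertices with no support neighbour
    set Cs : Finset V := univ.filter (fun v => BP G v ∧ ∀ s, SP G s → ¬ G.Adj s v) with hCs
    -- a maximal independent subset of C
    obtain ⟨M, hMF, hMmax'⟩ := Finset.exists_maximal
      (s := (Cs.powerset).filter (fun A => ∀ x ∈ A, ∀ y ∈ A, ¬ G.Adj x y))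
      ⟨∅, by simp⟩
    beta_reduce at hMF hMmax'
    have hMmax : ∀ x ∈ (Cs.powerset).filter (fun A => ∀ x ∈ A, ∀ y ∈ A, ¬ G.Adj x y), ¬ M < x :=
      fun x hx hlt => lt_irrefl _ (lt_of_lt_of_le hlt (hMmax' hx hlt.le))
    rw [mem_filter, mem_powerset] at hMF
    obtain ⟨hMC, hMind⟩ := hMF
    have hMdom : ∀ c ∈ Cs, c ∉ M → ∃ m ∈ M, G.Adj m c := by
      intro c hc hcM
      by_contra hno
      push_neg at hno
      have hins : insert c M ∈ (Cs.powerset).filter (fun A => ∀ x ∈ A, ∀ y ∈ A, ¬ G.Adj x y) := by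
        rw [mem_filter, mem_powerset]
        refine ⟨insert_subset hc hMC, ?_⟩
        intro x hx y hy
        rw [mem_insert] at hx hy
        rcases hx with rfl | hx <;> rcases hy with rfl | hy
        · exact G.irrefl
        · exact fun hh => hno y hy hh.symm
        · exact hno x hx
        · exact hMind x hx y hy
      exact hMmax _ hins (ssubset_insert hcM)
    -- the certified dominating set
    set D : Finset V := univ.filter (fun v => G.degree v = 0 ∨ SP G v ∨
      (G.degree v = 1 ∧ ∀ x, G.Adj v x → (G.degree x = 1 ∨ (SP G x ∧ NoB G x))) ∨ v ∈ M)
      with hDdef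
    have hmemD : ∀ v : V, v ∈ D ↔ (G.degree v = 0 ∨ SP G v ∨
        (G.degree v = 1 ∧ ∀ x, G.Adj v x → (G.degree x = 1 ∨ (SP G x ∧ NoB G x))) ∨ v ∈ M) := by
      intro v; rw [hDdef, mem_filter]; simp
    have hmemCs : ∀ v : V, v ∈ Cs ↔ BP G v ∧ ∀ s, SP G s → ¬ G.Adj s v := by
      intro v; rw [hCs, mem_filter]; simp
    -- neighbours of M-vertices are all outside D
    have hMnbr : ∀ m ∈ M, ∀ x, G.Adj m x → x ∉ D := by
      intro m hm x hadj hxD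
      have hmCs := (hmemCs m).mp (hMC hm)
      rw [hmemD] at hxD
      rcases hxD with h0 | hSx | hcl | hxM
      · have := adj_degree_pos hadj.symm; omega
      · exact hmCs.2 x hSx hadj.symm
      · have : x ∈ leafNbrs G m := mem_leafNbrs.mpr ⟨hadj, hcl.1⟩
        rw [hmCs.1.2] at this
        exact notMem_empty x this
      · exact hMind m hm x hxM hadj
    -- classification of vertices outside D
    have hnotP : ∀ v, v ∉ D →
        (G.degree v = 1 ∧ ∃ u, G.Adj v u ∧ SP G u ∧ ¬ NoB G u) ∨ (BP G v ∧ v ∉ M) := by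
      intro v hv
      rw [hmemD] at hv
      push_neg at hv
      obtain ⟨h0, hS, hcl, hM⟩ := hv
      by_cases hd1 : G.degree v = 1
      · left
        obtain ⟨x, hxadj, hxd1, hxSP⟩ := hcl hd1
        have hSPx : SP G x := by
          refine ⟨hxd1, ?_⟩
          rw [← nonempty_iff_ne_empty]
          exact ⟨v, mem_leafNbrs.mpr ⟨hxadj.symm, hd1⟩⟩
        exact ⟨hd1, x, hxadj, hSPx, hxSP hSPx⟩
      · right
        have hd2 : 2 ≤ G.degree v := by omega
        have hlv : leafNbrs G v = ∅ := by
          unfold SP at hS; rw [not_and] at hS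
          have := hS hd1
          rw [not_not] at this
          exact this
        exact ⟨⟨hd2, hlv⟩, hM⟩
    refine ⟨D, ⟨?_, ?_⟩, ?_⟩
    · -- dominating
      intro v hv
      rcases hnotP v hv with ⟨hd1, u, hadj, hSPu, -⟩ | ⟨hBv, hvM⟩
      · exact ⟨u, (hmemD u).mpr (Or.inr (Or.inl hSPu)), hadj.symm⟩
      · by_cases hsup : ∃ s, SP G s ∧ G.Adj s v
        · obtain ⟨s, hSPs, hadj⟩ := hsup
          exact ⟨s, (hmemD s).mpr (Or.inr (Or.inl hSPs)), hadj⟩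
        · have hvCs : v ∈ Cs := (hmemCs v).mpr ⟨hBv, fun s hSPs hadj => hsup ⟨s, hSPs, hadj⟩⟩
          obtain ⟨m, hm, hadj⟩ := hMdom v hvCs hvM
          exact ⟨m, (hmemD m).mpr (Or.inr (Or.inr (Or.inr hm))), hadj⟩
    · -- certified
      intro v hv
      rw [hmemD] at hv
      rcases hv with h0 | hSPv | hcl | hM
      · left
        rw [card_eq_zero, card_eq_zero.mp h0]
        exact empty_sdiff D
      · -- v is a support
        have hcard1 : (leafNbrs G v).card = 1 :=
          le_antisymm (hle1 v) (card_pos.mpr (nonempty_iff_ne_empty.mpr hSPv.2))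
        obtain ⟨l, hleq⟩ := card_eq_one.mp hcard1
        have hlmem : l ∈ leafNbrs G v := by rw [hleq]; exact mem_singleton_self l
        rw [mem_leafNbrs] at hlmem
        obtain ⟨hvl, hdl⟩ := hlmem
        by_cases hvB : NoB G v
        · left
          rw [card_eq_zero, eq_empty_iff_forall_notMem]
          intro x hx
          rw [mem_sdiff, SimpleGraph.mem_neighborFinset] at hx
          obtain ⟨hadj, hxD⟩ := hx
          apply hxD
          rw [hmemD]
          by_cases hdx : G.degree x = 1
          · -- x is the leaf l
            have hxl : x = l := by
              have : x ∈ leafNbrs G v := mem_leafNbrs.mpr ⟨hadj, hdx⟩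
              rw [hleq, mem_singleton] at this; exact this
            subst hxl
            refine Or.inr (Or.inr (Or.inl ⟨hdx, ?_⟩))
            intro y hy
            have : y ∈ G.neighborFinset x := (SimpleGraph.mem_neighborFinset G x y).mpr hy
            rw [leaf_nbr_finset hdx hadj.symm, mem_singleton] at this
            subst this
            exact Or.inr ⟨hSPv, hvB⟩
          · by_cases hlx : leafNbrs G x = ∅
            · exfalso
              have hdx2 : 2 ≤ G.degree x := by
                have := adj_degree_pos hadj.symm; omega
              exact hvB x ⟨hdx2, hlx⟩ hadj
            · exact Or.inr (Or.inl ⟨hdx, hlx⟩)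
        · -- v has a B-neighbour b; l and b are two outside neighbours
          right
          have hexb : ∃ b, BP G b ∧ G.Adj v b := by
            by_contra hcon
            push_neg at hcon
            exact hvB fun b hb hadj => hcon b hb hadj
          obtain ⟨b, hBb, hvb⟩ := hexb
          have hlD : l ∉ D := by
            rw [hmemD]
            intro hPl
            rcases hPl with h0' | hS' | hcl' | hM'
            · omega
            · exact hS'.1 hdl
            · obtain ⟨-, hall⟩ := hcl'
              rcases hall v hvl.symm with hd1' | ⟨-, hNoBv⟩
              · exact hSPv.1 hd1'
              · exact hNoBv b hBb hvb
            · have := ((hmemCs l).mp (hMC hM')).1.1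
              omega
          have hbD : b ∉ D := by
            rw [hmemD]
            intro hPb
            rcases hPb with h0' | hS' | hcl' | hM'
            · have := hBb.1; omega
            · exact hS'.2 hBb.2
            · have := hBb.1; omega
            · exact ((hmemCs b).mp (hMC hM')).2 v hSPv hvb
          have hlb : l ≠ b := by
            intro hh
            rw [hh] at hdl
            have := hBb.1
            omega
          have hsub : ({l, b} : Finset V) ⊆ G.neighborFinset v \ D := by
            intro x hx
            rw [mem_insert, mem_singleton] at hx
            rcases hx with rfl | rfl
            · exact mem_sdiff.mpr ⟨(SimpleGraph.mem_neighborFinset G v x).mpr hvl, hlD⟩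
            · exact mem_sdiff.mpr ⟨(SimpleGraph.mem_neighborFinset G v x).mpr hvb, hbD⟩
          calc 2 = ({l, b} : Finset V).card := by
                rw [card_insert_of_notMem (by simpa using hlb), card_singleton]
            _ ≤ _ := card_le_card hsub
      · -- v is a protected leaf
        left
        rw [card_eq_zero, eq_empty_iff_forall_notMem]
        intro x hx
        rw [mem_sdiff, SimpleGraph.mem_neighborFinset] at hx
        obtain ⟨hadj, hxD⟩ := hx
        apply hxD
        rw [hmemD]
        rcases hcl.2 x hadj with hd1 | ⟨hSPx, -⟩
        · refine Or.inr (Or.inr (Or.inl ⟨hd1, ?_⟩))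
          intro y hy
          have : y ∈ G.neighborFinset x := (SimpleGraph.mem_neighborFinset G x y).mpr hy
          rw [leaf_nbr_finset hd1 hadj.symm, mem_singleton] at this
          subst this
          exact Or.inl hcl.1
        · exact Or.inr (Or.inl hSPx)
      · -- v ∈ M
        right
        have hBv := ((hmemCs v).mp (hMC hM)).1
        have hEq : G.neighborFinset v \ D = G.neighborFinset v := by
          rw [Finset.sdiff_eq_self_iff_disjoint]
          rw [disjoint_left]
          intro x hx
          exact hMnbr v hM x ((SimpleGraph.mem_neighborFinset G v x).mp hx)
        rw [hEq, SimpleGraph.card_neighborFinset_eq_degree]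
        exact hBv.1
    · -- D is strictly smaller than V
      have hTne : ∃ u, u ∉ D := by
        by_cases hwM : w ∈ M
        · obtain ⟨x, hx⟩ := card_pos.mp (by
            rw [SimpleGraph.card_neighborFinset_eq_degree]; omega :
            0 < (G.neighborFinset w).card)
          exact ⟨x, hMnbr w hwM x ((SimpleGraph.mem_neighborFinset G w x).mp hx)⟩
        · refine ⟨w, ?_⟩
          rw [hmemD]
          intro hPw
          rcases hPw with h0 | hS | hcl | hM'
          · exact hw0 h0
          · exact hS.2 hwB
          · exact hw1 hcl.1
          · exact hwM hM'
      obtain ⟨u, hu⟩ := hTne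
      rw [← card_univ]
      exact card_lt_card ((ssubset_iff_of_subset (subset_univ D)).mpr ⟨u, mem_univ u, hu⟩)

lemma gammaCer_eq_card_iff (G : SimpleGraph V) [DecidableRel G.Adj] :
    gammaCer G = Fintype.card V ↔ ∀ v, G.degree v = 0 ∨ IsLeaf G v ∨ IsWeakSupport G v := by
  constructor
  · intro heq
    by_contra hbad
    obtain ⟨D, hD, hlt⟩ := exists_small_cds G hbad
    have hle : gammaCer G ≤ D.card := Nat.sInf_le ⟨D, hD, rfl⟩
    omega
  · intro hall
    obtain ⟨D, hD, hcD⟩ := Nat.sInf_mem (cdsSet_nonempty G)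
    have hDu : D = univ := cds_eq_univ hall hD
    have : gammaCer G = D.card := hcD.symm
    rw [this, hDu, card_univ]

end NordhausGaddumAux

theorem nordhausGaddum_min_degree_zero (G : SimpleGraph V) [DecidableRel G.Adj]
    (hcard : 3 ≤ Fintype.card V)
    (h : (∃ v, G.degree v = 0) ∨ (∃ v, Gᶜ.degree v = 0)) :
    gammaCer G + gammaCer Gᶜ ≤ Fintype.card V + 1 ∧
    gammaCer G * gammaCer Gᶜ ≤ Fintype.card V ∧
    (gammaCer G + gammaCer Gᶜ = Fintype.card V + 1 ↔
      gammaCer G * gammaCer Gᶜ = Fintype.card V) ∧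
    (gammaCer G + gammaCer Gᶜ = Fintype.card V + 1 ↔
      (((∃ v, G.degree v = 0) ∧
          ∀ v : V, G.degree v = 0 ∨ IsLeaf G v ∨ IsWeakSupport G v) ∨
        ((∃ v, Gᶜ.degree v = 0) ∧
          ∀ v : V, Gᶜ.degree v = 0 ∨ IsLeaf Gᶜ v ∨ IsWeakSupport Gᶜ v))) := by
  rcases h with ⟨v, hv⟩ | ⟨v, hv⟩
  · -- G has an isolated vertex; v is universal in Gᶜ
    have hnbrs : ∀ u, ¬ G.Adj v u := by
      intro u hadj
      have := adj_degree_pos hadj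
      omega
    have huniv : ∀ u, u ≠ v → Gᶜ.Adj v u := by
      intro u hu
      exact (SimpleGraph.compl_adj G v u).mpr ⟨fun hh => hu hh.symm, hnbrs u⟩
    have hb : gammaCer Gᶜ = 1 := gammaCer_eq_one Gᶜ v hcard huniv
    have hexcl : ¬ ∃ u, Gᶜ.degree u = 0 := by
      rintro ⟨u, hu⟩
      have hadjall : ∀ x, ¬ Gᶜ.Adj u x := by
        intro x hadj
        have := adj_degree_pos hadj
        omega
      rcases eq_or_ne u v with rfl | hne
      · obtain ⟨x, hx⟩ := Fintype.exists_ne_of_one_lt_card (by omega) u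
        exact hadjall x (huniv x hx)
      · exact hadjall v (huniv u hne).symm
    have hA := gammaCer_eq_card_iff G
    have hle := gammaCer_le_card G
    rw [hb, mul_one]
    refine ⟨by omega, hle, by constructor <;> (intro hh; omega), ?_⟩
    constructor
    · intro hh
      exact Or.inl ⟨⟨v, hv⟩, hA.mp (by omega)⟩
    · rintro (⟨-, hchar⟩ | ⟨hex, -⟩)
      · have := hA.mpr hchar
        omega
      · exact absurd hex hexcl
  · -- Gᶜ has an isolated vertex; v is universal in G
    have hnbrsC : ∀ u, ¬ Gᶜ.Adj v u := by
      intro u hadj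
      have := adj_degree_pos hadj
      omega
    have huniv : ∀ u, u ≠ v → G.Adj v u := by
      intro u hu
      by_contra hcon
      exact hnbrsC u ((SimpleGraph.compl_adj G v u).mpr ⟨fun hh => hu hh.symm, hcon⟩)
    have ha : gammaCer G = 1 := gammaCer_eq_one G v hcard huniv
    have hexcl : ¬ ∃ u, G.degree u = 0 := by
      rintro ⟨u, hu⟩
      have hadjall : ∀ x, ¬ G.Adj u x := by
        intro x hadj
        have := adj_degree_pos hadj
        omega
      rcases eq_or_ne u v with rfl | hne
      · obtain ⟨x, hx⟩ := Fintype.exists_ne_of_one_lt_card (by omega) u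
        exact hadjall x (huniv x hx)
      · exact hadjall v (huniv u hne).symm
    have hA := gammaCer_eq_card_iff Gᶜ
    have hle := gammaCer_le_card Gᶜ
    rw [ha, one_mul]
    refine ⟨by omega, hle, by constructor <;> (intro hh; omega), ?_⟩
    constructor
    · intro hh
      exact Or.inr ⟨⟨v, hv⟩, hA.mp (by omega)⟩
    · rintro (⟨hex, -⟩ | ⟨-, hchar⟩)
      · exact absurd hex hexcl
      · have := hA.mpr hchar
        omega
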